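/- Let c be a rail arc and let 0 < a < 1 with A = c(0) ∈ ℓ1, B = c(a), and suppose c([0,a]) = [A,B]. Let C ∈ ℓ1 be a point such that A, B, C are affinely independent and the closed triangle T = convexHull{A,B,C} satisfies T ∩ c([0,1]) = [A,B] and T ∩ (ℓ1 ∪ ℓ2) = [A,C]. Let c' be a rail arc with c'(t) = c(t) for all t ∈ [a,1], c'(0) = C, and c'([0,a]) = [C,B]. Then there exists a rail isotopy taking c onto c' (i.e. every space slide move on a rail arc, sliding its endpoint along a rail, is realized by a rail isotopy of ℝ³). -/
import Mathlib
set_option maxHeartbeats 1000000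


open Set unitInterval Function Metric Matrix

noncomputable section

/-- We model `ℝ³` as `Fin 3 → ℝ`. -/
abbrev R3 := Fin 3 → ℝ

/-- `ℓ` is a line (one-dimensional affine subspace) in `ℝ³` with direction vector `v`. -/
def IsLineWithDir (v : R3) (ℓ : Set R3) : Prop :=
  ∃ p : R3, ℓ = {x : R3 | ∃ t : ℝ, x = p + t • v}

/-- `ℓ1, ℓ2` are two disjoint parallel lines in `ℝ³` (the rails): one-dimensional affine
subspaces with the same direction, and `ℓ1 ≠ ℓ2`. -/
def RailsPair (ℓ1 ℓ2 : Set R3) : Prop :=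
  (∃ v : R3, v ≠ 0 ∧ IsLineWithDir v ℓ1 ∧ IsLineWithDir v ℓ2) ∧ Disjoint ℓ1 ℓ2 ∧ ℓ1 ≠ ℓ2

/-- A rail arc: a continuous injective map `c : [0,1] → ℝ³` with `c 0 ∈ ℓ1`, `c 1 ∈ ℓ2`,
and `c t ∉ ℓ1 ∪ ℓ2` for all interior parameters `t ∈ (0,1)`. -/
def RailArc (ℓ1 ℓ2 : Set R3) (c : unitInterval → R3) : Prop :=
  Continuous c ∧ Function.Injective c ∧ c 0 ∈ ℓ1 ∧ c 1 ∈ ℓ2 ∧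
    ∀ t : unitInterval, 0 < (t : ℝ) → (t : ℝ) < 1 → c t ∉ ℓ1 ∪ ℓ2

/-- A rail isotopy taking the rail arc `c₁` onto the rail arc `c₂`: a continuous map
`H : [0,1] × ℝ³ → ℝ³` with `H 0 = id`, each time slice a homeomorphism of `ℝ³` mapping
each rail onto itself, and the time-1 slice mapping the image of `c₁` onto that of `c₂`. -/
def RailIsotopy (ℓ1 ℓ2 : Set R3) (c₁ c₂ : unitInterval → R3)
    (H : unitInterval → R3 → R3) : Prop :=
  Continuous (Function.uncurry H) ∧ H 0 = id ∧
    (∀ t : unitInterval, ∃ φ : R3 ≃ₜ R3, ⇑φ = H t ∧ φ '' ℓ1 = ℓ1 ∧ φ '' ℓ2 = ℓ2) ∧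
    H 1 '' (Set.range c₁) = Set.range c₂


section Shear

variable (u : R3) (lam : R3 → ℝ)

lemma shear_key (y : R3) (t τ : ℝ) :
    y + (t + τ) • u = (y + t • u) + τ • u := by
  rw [add_assoc, ← add_smul]

lemma shear_mono (h1 : ∀ x, lam x ≤ 1)
    (hstrict : ∀ x (τ : ℝ), 0 < τ → lam x - τ < lam (x + τ • u))
    {s : ℝ} (hs0 : 0 ≤ s) (hs1 : s ≤ 1) (y : R3) :
    StrictMono (fun t : ℝ => t + s * lam (y + t • u)) := by
  intro t t' ht
  have hz : y + t' • u = (y + t • u) + (t' - t) • u := by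
    rw [← shear_key]; ring_nf
  have hd := hstrict (y + t • u) (t' - t) (by linarith)
  rw [← hz] at hd
  set d := lam (y + t' • u) - lam (y + t • u) with hdd
  have hdgt : -(t' - t) < d := by simp only [hdd]; linarith
  have hsd : -(t' - t) < s * d := by
    rcases le_or_gt 0 d with h | h
    · nlinarith
    · nlinarith
  simp only
  nlinarith

lemma shear_root (hc : Continuous lam) (h0 : ∀ x, 0 ≤ lam x) (h1 : ∀ x, lam x ≤ 1)
    {s : ℝ} (hs0 : 0 ≤ s) (hs1 : s ≤ 1) (y : R3) :
    ∃ t : ℝ, t + s * lam (y + t • u) = 0 := by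
  have hcont : ContinuousOn (fun t : ℝ => t + s * lam (y + t • u)) (Icc (-1) 0) := by
    fun_prop
  have h01 : (0:ℝ) ∈ Icc ((-1:ℝ) + s * lam (y + (-1:ℝ) • u)) ((0:ℝ) + s * lam (y + (0:ℝ) • u)) := by
    constructor
    · have := h1 (y + (-1:ℝ) • u)
      have h0' := h0 (y + (-1:ℝ) • u)
      nlinarith
    · have h0' := h0 (y + (0:ℝ) • u)
      nlinarith
  have := intermediate_value_Icc (by norm_num : (-1:ℝ) ≤ 0) hcont h01
  obtain ⟨t, _, ht⟩ := this
  exact ⟨t, ht⟩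

lemma shear_homeo (hc : Continuous lam) (h0 : ∀ x, 0 ≤ lam x) (h1 : ∀ x, lam x ≤ 1)
    (hstrict : ∀ x (τ : ℝ), 0 < τ → lam x - τ < lam (x + τ • u))
    {s : ℝ} (hs0 : 0 ≤ s) (hs1 : s ≤ 1) :
    ∃ φ : R3 ≃ₜ R3, (⇑φ = fun x => x + (s * lam x) • u) ∧
      (∀ ℓ : Set R3, (∀ x ∈ ℓ, ∀ r : ℝ, x + r • u ∈ ℓ) → φ '' ℓ = ℓ) := by
  set f : R3 → R3 := fun x => x + (s * lam x) • u with hf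
  have hf_cont : Continuous f :=
    continuous_id.add ((continuous_const.mul hc).smul continuous_const)
  have hfiber : ∀ x, x = f x + (-(s * lam x)) • u := by
    intro x
    simp only [hf, neg_smul]
    abel
  have hval : ∀ y t, f (y + t • u) = y + (t + s * lam (y + t • u)) • u := by
    intro y t
    rw [shear_key]
  -- injectivity
  have hinj : Function.Injective f := by
    intro x x' hxx
    have hx : x = f x + (-(s * lam x)) • u := hfiber x
    have hx' : x' = f x + (-(s * lam x')) • u := by rw [hxx]; exact hfiber x'
    set F := fun t : ℝ => t + s * lam (f x + t • u) with hF
    have hmono := shear_mono u lam h1 hstrict hs0 hs1 (f x)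
    have e1 : F (-(s * lam x)) = 0 := by
      simp only [hF, ← hx]; ring
    have e2 : F (-(s * lam x')) = 0 := by
      simp only [hF, ← hx']; ring
    have := hmono.injective (e1.trans e2.symm)
    rw [hx, hx', this]
  -- surjectivity
  have hsurj : Function.Surjective f := by
    intro y
    obtain ⟨t, ht⟩ := shear_root u lam hc h0 h1 hs0 hs1 y
    refine ⟨y + t • u, ?_⟩
    have h2 := hval y t
    rw [ht] at h2
    simpa using h2
  have hbij : Function.Bijective f := ⟨hinj, hsurj⟩
  set e := Equiv.ofBijective f hbij with he
  -- closed map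
  have hdist : ∀ x, dist x (f x) ≤ ‖u‖ := by
    intro x
    have : x - f x = (-(s * lam x)) • u := by
      simp only [hf, neg_smul]
      abel
    rw [dist_eq_norm, this, norm_smul]
    have h0' := h0 x
    have h1' := h1 x
    have : |(-(s * lam x))| ≤ 1 := by
      rw [abs_neg, abs_of_nonneg (by nlinarith)]
      nlinarith
    calc |(-(s * lam x))| * ‖u‖ ≤ 1 * ‖u‖ :=
          mul_le_mul_of_nonneg_right this (norm_nonneg u)
      _ = ‖u‖ := one_mul _
  have hclosed : IsClosedMap f := by
    intro F hFc
    apply IsSeqClosed.isClosed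
    intro seq y hseq hylim
    have hpn : ∀ n, ∃ p, p ∈ F ∧ f p = seq n := by
      intro n; obtain ⟨p, hp1, hp2⟩ := hseq n; exact ⟨p, hp1, hp2⟩
    choose p hpF hfp using hpn
    obtain ⟨N, hN⟩ := (Metric.tendsto_atTop.mp hylim) 1 one_pos
    have hq : ∀ n, p (n + N) ∈ closedBall y (1 + ‖u‖) := by
      intro n
      have h1' : dist (f (p (n + N))) y < 1 := by
        rw [hfp]; exact hN (n + N) (Nat.le_add_left N n)
      have := hdist (p (n + N))
      rw [mem_closedBall]
      calc dist (p (n + N)) y ≤ dist (p (n + N)) (f (p (n + N))) + dist (f (p (n + N))) y :=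
            dist_triangle _ _ _
        _ ≤ ‖u‖ + 1 := add_le_add this h1'.le
        _ = 1 + ‖u‖ := by ring
    obtain ⟨x, -, ψ, hψmono, hψlim⟩ :=
      (isCompact_closedBall y (1 + ‖u‖)).tendsto_subseq hq
    have hxF : x ∈ F := hFc.mem_of_tendsto hψlim
      (Filter.Eventually.of_forall fun n => hpF _)
    have hsub : Filter.Tendsto (fun n => seq (ψ n + N)) Filter.atTop (nhds y) := by
      apply hylim.comp
      exact (Filter.tendsto_add_atTop_nat N).comp hψmono.tendsto_atTop
    have hfx : Filter.Tendsto (fun n => f (p (ψ n + N))) Filter.atTop (nhds (f x)) :=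
      (hf_cont.continuousAt.tendsto).comp hψlim
    have : f x = y := by
      apply tendsto_nhds_unique hfx
      simpa only [hfp] using hsub
    exact ⟨x, hxF, this⟩
  have hinv_cont : Continuous (e.symm : R3 → R3) := by
    rw [continuous_iff_isClosed]
    intro C hC
    have : (e.symm : R3 → R3) ⁻¹' C = f '' C := by
      ext y
      simp only [mem_preimage, mem_image]
      constructor
      · intro h
        exact ⟨e.symm y, h, e.apply_symm_apply y⟩
      · rintro ⟨x, hx, rfl⟩
        have : e.symm (e x) = x := e.symm_apply_apply x
        simpa [he] using this ▸ hx
    rw [this]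
    exact hclosed C hC
  refine ⟨⟨e, hf_cont, hinv_cont⟩, rfl, ?_⟩
  intro ℓ hℓ
  apply Subset.antisymm
  · rintro _ ⟨x, hx, rfl⟩
    exact hℓ x hx _
  · intro y hy
    refine ⟨e.symm y, ?_, e.apply_symm_apply y⟩
    have hy' : y = f (e.symm y) := (e.apply_symm_apply y).symm
    have := hfiber (e.symm y)
    rw [← hy'] at this
    rw [this]
    exact hℓ y hy _

end Shear


lemma lam_exists (A u w : R3) (vA : R3 → ℝ) (K : Set R3)
    (hvc : Continuous vA)
    (hvline : ∀ (x : R3) (τ : ℝ), vA (x + τ • u) = vA x)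
    (hvseg : ∀ θ : ℝ, vA (A + θ • w) = 1 - θ)
    (hK : IsCompact K)
    (hBK : A + w ∈ K)
    (hGEO : ∀ θ τ : ℝ, 0 ≤ θ → θ ≤ 1 → 0 ≤ τ → A + θ • w + τ • u ∈ K →
      1 - θ < τ ∨ (τ = 0 ∧ θ = 1)) :
    ∃ lam : R3 → ℝ, Continuous lam ∧ (∀ x, 0 ≤ lam x) ∧ (∀ x, lam x ≤ 1) ∧
      (∀ (x : R3) (τ : ℝ), 0 < τ → lam x - τ < lam (x + τ • u)) ∧
      (∀ θ : ℝ, 0 ≤ θ → θ ≤ 1 → lam (A + θ • w) = 1 - θ) ∧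
      (∀ x ∈ K, lam x = 0) := by
  classical
  have hKne : K.Nonempty := ⟨A + w, hBK⟩
  set Seg : Set R3 := (fun θ : ℝ => A + θ • w) '' Icc 0 1 with hSegdef
  have hBSeg : A + w ∈ Seg := ⟨1, ⟨zero_le_one, le_refl 1⟩, by simp⟩
  have hSegv0 : ∀ x ∈ Seg, 0 ≤ vA x := by
    rintro x ⟨θ, hθ, rfl⟩; rw [hvseg]; linarith [hθ.2]
  have hSegv1 : ∀ x ∈ Seg, vA x ≤ 1 := by
    rintro x ⟨θ, hθ, rfl⟩; rw [hvseg]; linarith [hθ.1]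
  have hSegc : IsCompact Seg :=
    isCompact_Icc.image (continuous_const.add (continuous_id.smul continuous_const))
  -- the pair set P
  set P : Set (R3 × ℝ) :=
    {p | p.1 ∈ Seg ∧ p.2 ∈ Icc (0:ℝ) 2 ∧ p.1 + p.2 • u ∈ K} with hPdef
  have hPc : IsCompact P := by
    have h1 : IsCompact (Seg ×ˢ Icc (0:ℝ) 2) := hSegc.prod isCompact_Icc
    have h2 : P = (Seg ×ˢ Icc (0:ℝ) 2) ∩ ((fun p : R3 × ℝ => p.1 + p.2 • u) ⁻¹' K) := by
      ext p; simp only [hPdef, mem_setOf_eq, mem_inter_iff, mem_prod, mem_preimage]; tauto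
    rw [h2]
    exact h1.inter_right (hK.isClosed.preimage
      ((continuous_fst).add ((continuous_snd).smul continuous_const)))
  have hPne : ((A + w, (0:ℝ)) : R3 × ℝ) ∈ P := by
    refine ⟨hBSeg, by norm_num, by simpa⟩
  have hvAB : vA (A + w) = 0 := by
    have := hvseg 1; rwa [one_smul, sub_self] at this
  have hP0 : ∀ p ∈ P, p.2 = 0 → vA p.1 = 0 := by
    rintro ⟨x, τ⟩ ⟨hx, hτ, hKmem⟩ h0
    obtain ⟨θ, hθ, rfl⟩ := hx
    have h0' : τ = 0 := h0
    subst h0'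
    have := hGEO θ 0 hθ.1 hθ.2 le_rfl (by simpa using hKmem)
    rcases this with h | ⟨-, h⟩
    · linarith [hθ.2]
    · rw [hvseg, h]; ring
  have hPr0 : ∀ p ∈ P, 0 ≤ vA p.1 / p.2 := by
    rintro p hp
    exact div_nonneg (hSegv0 _ hp.1) hp.2.1.1
  have hPr1 : ∀ p ∈ P, vA p.1 / p.2 < 1 := by
    rintro ⟨x, τ⟩ ⟨hx, hτ, hKmem⟩
    rcases eq_or_lt_of_le hτ.1 with h0 | hpos
    · rw [← h0, div_zero]; norm_num
    · obtain ⟨θ, hθ, rfl⟩ := hx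
      have := hGEO θ τ hθ.1 hθ.2 hτ.1 hKmem
      rcases this with h | ⟨h, -⟩
      · rw [hvseg]
        exact (div_lt_one hpos).mpr h
      · exact absurd h (ne_of_gt hpos)
  -- the function g and its sup E
  set g : R3 × ℝ → ℝ → ℝ := fun p τ => min (vA p.1) (vA p.1 / p.2 * τ) with hgdef
  have hg_le : ∀ p ∈ P, ∀ τ : ℝ, g p τ ≤ vA p.1 := fun p _ τ => min_le_left _ _
  have hg_le1 : ∀ p ∈ P, ∀ τ : ℝ, g p τ ≤ 1 := fun p hp τ =>
    (hg_le p hp τ).trans (hSegv1 _ hp.1)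
  have hg_nonneg : ∀ p ∈ P, ∀ τ : ℝ, 0 ≤ τ → 0 ≤ g p τ := by
    intro p hp τ hτ
    exact le_min (hSegv0 _ hp.1) (mul_nonneg (hPr0 p hp) hτ)
  have hg_mono : ∀ p ∈ P, ∀ a b : ℝ, a ≤ b → g p a ≤ g p b := by
    intro p hp a b hab
    exact min_le_min le_rfl (mul_le_mul_of_nonneg_left hab (hPr0 p hp))
  have hg_lip : ∀ p ∈ P, ∀ a b : ℝ, a ≤ b → g p b ≤ g p a + vA p.1 / p.2 * (b - a) := by
    intro p hp a b hab
    have hr := hPr0 p hp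
    have h1 : vA p.1 / p.2 * b = vA p.1 / p.2 * a + vA p.1 / p.2 * (b - a) := by ring
    have h2 : 0 ≤ vA p.1 / p.2 * (b - a) := mul_nonneg hr (by linarith)
    calc g p b = min (vA p.1) (vA p.1 / p.2 * a + vA p.1 / p.2 * (b - a)) := by
          rw [hgdef]; simp only [← h1]
      _ ≤ min (vA p.1 + vA p.1 / p.2 * (b - a)) (vA p.1 / p.2 * a + vA p.1 / p.2 * (b - a)) :=
          min_le_min (by linarith) le_rfl
      _ = g p a + vA p.1 / p.2 * (b - a) := by rw [hgdef]; simp only [min_add_add_right]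
  set E : ℝ → ℝ := fun τ => sSup ((fun p => g p τ) '' P) with hEdef
  have hEbdd : ∀ τ, BddAbove ((fun p => g p τ) '' P) := by
    intro τ
    refine ⟨1, ?_⟩
    rintro x ⟨p, hp, rfl⟩
    exact hg_le1 p hp τ
  have hgB : ∀ τ : ℝ, g (A + w, (0:ℝ)) τ = 0 := by
    intro τ
    simp only [hgdef, hvAB]
    norm_num
  have hEnonneg : ∀ τ, 0 ≤ E τ := by
    intro τ
    have := le_csSup (hEbdd τ) (mem_image_of_mem _ hPne)
    rwa [hgB τ] at this
  have hE0 : E 0 = 0 := by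
    refine le_antisymm (Real.sSup_le ?_ le_rfl) (hEnonneg 0)
    rintro x ⟨p, hp, rfl⟩
    simp only [hgdef, mul_zero]
    exact min_le_right _ _
  have hEge : ∀ p ∈ P, ∀ τ : ℝ, p.2 ≤ τ → vA p.1 ≤ E τ := by
    intro p hp τ hτ
    have : g p τ = vA p.1 := by
      rcases eq_or_lt_of_le hp.2.1.1 with h0 | hpos
      · have hv0 := hP0 p hp h0.symm
        rw [hgdef]
        simp [hv0]
      · have : vA p.1 / p.2 * p.2 ≤ vA p.1 / p.2 * τ :=
          mul_le_mul_of_nonneg_left hτ (hPr0 p hp)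
        rw [div_mul_cancel₀ _ (ne_of_gt hpos)] at this
        exact min_eq_left this
    rw [← this]
    exact le_csSup (hEbdd τ) (mem_image_of_mem _ hp)
  have hEmono : ∀ a b : ℝ, a ≤ b → E a ≤ E b := by
    intro a b hab
    refine Real.sSup_le ?_ (hEnonneg b)
    rintro x ⟨p, hp, rfl⟩
    exact (hg_mono p hp a b hab).trans (le_csSup (hEbdd b) (mem_image_of_mem _ hp))
  have hElip : ∀ a b : ℝ, a ≤ b → E b ≤ E a + (b - a) := by
    intro a b hab
    refine Real.sSup_le ?_ (by linarith [hEnonneg a])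
    rintro x ⟨p, hp, rfl⟩
    have h1 := hg_lip p hp a b hab
    have h2 : vA p.1 / p.2 * (b - a) ≤ b - a :=
      mul_le_of_le_one_left (by linarith) (hPr1 p hp).le
    have h3 : g p a ≤ E a := le_csSup (hEbdd a) (mem_image_of_mem _ hp)
    linarith
  have hEcont : Continuous E := by
    have : LipschitzWith 1 E := by
      apply LipschitzWith.of_dist_le_mul
      intro a b
      rw [Real.dist_eq, Real.dist_eq, NNReal.coe_one, one_mul]
      rcases le_total a b with h | h
      · rw [abs_of_nonpos (by linarith [hEmono a b h]), abs_of_nonpos (by linarith)]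
        linarith [hElip a b h]
      · rw [abs_of_nonneg (by linarith [hEmono b a h]), abs_of_nonneg (by linarith)]
        linarith [hElip b a h]
    exact this.continuous
  -- continuity of g in p, for attainment
  have hgcont : ∀ b : ℝ, 0 ≤ b → ContinuousOn (fun p => g p b) P := by
    intro b hb
    intro p hp
    rcases eq_or_lt_of_le hp.2.1.1 with h0 | hpos
    · -- p.2 = 0, squeeze
      have hv0 : vA p.1 = 0 := hP0 p hp h0.symm
      have hgp : g p b = 0 := by
        rw [hgdef]
        simp only [← h0, div_zero, zero_mul]
        simp [hv0]
      rw [ContinuousWithinAt, hgp]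
      have hbound : ∀ q ∈ P, g q b ≤ vA q.1 := fun q hq => hg_le q hq b
      have hbound0 : ∀ q ∈ P, 0 ≤ g q b := fun q hq => hg_nonneg q hq b hb
      have hvlim : Filter.Tendsto (fun q : R3 × ℝ => vA q.1) (nhdsWithin p P) (nhds 0) := by
        rw [← hv0]
        exact ((hvc.comp continuous_fst).continuousAt).continuousWithinAt
      refine tendsto_of_tendsto_of_tendsto_of_le_of_le' tendsto_const_nhds hvlim ?_ ?_
      · filter_upwards [self_mem_nhdsWithin] with q hq using hbound0 q hq
      · filter_upwards [self_mem_nhdsWithin] with q hq using hbound q hq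
    · -- p.2 > 0
      apply ContinuousAt.continuousWithinAt
      exact Filter.Tendsto.min (hvc.comp continuous_fst).continuousAt
        ((((hvc.comp continuous_fst).continuousAt).div
          continuous_snd.continuousAt (ne_of_gt hpos)).mul continuousAt_const)
  have hEstrict : ∀ a b : ℝ, 0 ≤ a → a < b → E b < E a + (b - a) := by
    intro a b ha hab
    have hb : (0:ℝ) ≤ b := le_of_lt (lt_of_le_of_lt ha hab)
    obtain ⟨ps, hpsP, hmax⟩ := hPc.exists_isMaxOn ⟨_, hPne⟩ (hgcont b hb)
    have hEb : E b = g ps b := by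
      refine le_antisymm (Real.sSup_le ?_ (hg_nonneg ps hpsP b hb)) ?_
      · rintro x ⟨q, hq, rfl⟩
        exact hmax hq
      · exact le_csSup (hEbdd b) (mem_image_of_mem _ hpsP)
    have h1 := hg_lip ps hpsP a b hab.le
    have h2 : vA ps.1 / ps.2 * (b - a) < b - a := by
      have := hPr1 ps hpsP
      have hba : (0:ℝ) < b - a := by linarith
      calc vA ps.1 / ps.2 * (b - a) < 1 * (b - a) :=
            mul_lt_mul_of_pos_right this hba
        _ = b - a := one_mul _
    have h3 : g ps a ≤ E a := le_csSup (hEbdd a) (mem_image_of_mem _ hpsP)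
    rw [hEb]
    linarith
  -- the function mu
  set mu : ℝ → ℝ := fun τ => min 1 (max (τ / 2) (E τ)) with hmudef
  have hmu0 : mu 0 = 0 := by
    rw [hmudef]; simp [hE0]
  have hmunn : ∀ τ, 0 ≤ mu τ := by
    intro τ
    exact le_min zero_le_one ((hEnonneg τ).trans (le_max_right _ _))
  have hmule1 : ∀ τ, mu τ ≤ 1 := fun τ => min_le_left _ _
  have hmuge : ∀ p ∈ P, ∀ τ : ℝ, p.2 ≤ τ → vA p.1 ≤ mu τ := by
    intro p hp τ hτ
    exact le_min (hSegv1 _ hp.1) ((hEge p hp τ hτ).trans (le_max_right _ _))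
  have hmuhalf : ∀ τ, min 1 (τ / 2) ≤ mu τ := fun τ =>
    min_le_min le_rfl (le_max_left _ _)
  have hmustrict : ∀ a b : ℝ, 0 ≤ a → a < b → mu b < mu a + (b - a) := by
    intro a b ha hab
    have hmax : max (b / 2) (E b) < max (a / 2) (E a) + (b - a) := by
      apply max_lt
      · have : a / 2 ≤ max (a / 2) (E a) := le_max_left _ _
        linarith
      · have : E a ≤ max (a / 2) (E a) := le_max_right _ _
        linarith [hEstrict a b ha hab]
    rcases le_total 1 (max (a / 2) (E a)) with h | h
    · have : mu a = 1 := min_eq_left h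
      rw [this]
      calc mu b ≤ 1 := hmule1 b
        _ < 1 + (b - a) := by linarith
    · have : mu a = max (a / 2) (E a) := min_eq_right h
      rw [this]
      calc mu b ≤ max (b / 2) (E b) := min_le_right _ _
        _ < max (a / 2) (E a) + (b - a) := hmax
  have hmucont : Continuous mu :=
    continuous_const.min ((continuous_id.div_const 2).max hEcont)
  -- the transverse penalty nu
  set Q : Set (R3 × ℝ) := Seg ×ˢ Icc (0:ℝ) 2 with hQdef
  have hQc : IsCompact Q := hSegc.prod isCompact_Icc
  have hQB : ((A + w, (0:ℝ)) : R3 × ℝ) ∈ Q := ⟨hBSeg, by norm_num⟩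
  set d : R3 × ℝ → ℝ := fun q => infDist (q.1 + q.2 • u) K with hddef
  set wq : R3 × ℝ → ℝ := fun q => vA q.1 - mu q.2 with hwqdef
  set wp : R3 × ℝ → ℝ := fun q => max (wq q) 0 with hwpdef
  set tN : R3 × ℝ → ℝ → ℝ := fun q r => min (wp q) (wp q / d q * r) with htNdef
  have hd_nonneg : ∀ q : R3 × ℝ, 0 ≤ d q := fun q => infDist_nonneg
  have hdcont : Continuous d :=
    (continuous_infDist_pt K).comp ((continuous_fst).add ((continuous_snd).smul continuous_const))
  have hwqcont : Continuous wq := (hvc.comp continuous_fst).sub (hmucont.comp continuous_snd)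
  have hdist0 : ∀ q ∈ Q, d q = 0 → wq q ≤ 0 := by
    rintro ⟨x, τ⟩ ⟨hx, hτ⟩ hd0
    have hmem : x + τ • u ∈ K := by
      rw [hK.isClosed.mem_iff_infDist_zero hKne]
      exact hd0
    have hpP : ((x, τ) : R3 × ℝ) ∈ P := ⟨hx, hτ, hmem⟩
    have := hmuge _ hpP τ le_rfl
    simp only [hwqdef]
    linarith
  have hwp_nonneg : ∀ q, 0 ≤ wp q := fun q => le_max_right _ _
  have hwp_le1 : ∀ q ∈ Q, wp q ≤ 1 := by
    intro q hq
    have h1 : vA q.1 ≤ 1 := hSegv1 _ hq.1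
    have h2 : 0 ≤ mu q.2 := hmunn q.2
    have h3 : wq q ≤ 1 := by simp only [hwqdef]; linarith
    exact max_le h3 zero_le_one
  have hwqB : wq (A + w, (0:ℝ)) = 0 := by
    simp only [hwqdef, hvAB, hmu0]; ring
  have htNB : ∀ r : ℝ, tN (A + w, (0:ℝ)) r = 0 := by
    intro r
    simp only [htNdef, hwpdef, hwqB]
    norm_num
  have hF1 : ∀ ε : ℝ, 0 < ε → ∃ η : ℝ, 0 < η ∧ ∀ q ∈ Q, d q ≤ η → wq q ≤ ε := by
    intro ε hε
    set Q' : Set (R3 × ℝ) := Q ∩ {q | ε ≤ wq q} with hQ'def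
    have hQ'c : IsCompact Q' := hQc.inter_right (isClosed_le continuous_const hwqcont)
    rcases Q'.eq_empty_or_nonempty with hemp | hne
    · refine ⟨1, one_pos, ?_⟩
      intro q hq _
      by_contra hcon
      push_neg at hcon
      have : q ∈ Q' := ⟨hq, hcon.le⟩
      rw [hemp] at this
      exact this
    · obtain ⟨qs, hqsQ', hmin⟩ := hQ'c.exists_isMinOn hne (hdcont.continuousOn)
      have hds : 0 < d qs := by
        rcases lt_or_eq_of_le (hd_nonneg qs) with h | h
        · exact h
        · exfalso
          have := hdist0 qs hqsQ'.1 h.symm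
          have h2 := hqsQ'.2
          simp only [mem_setOf_eq] at h2
          linarith
      refine ⟨d qs / 2, by linarith, ?_⟩
      intro q hq hdq
      by_contra hcon
      push_neg at hcon
      have hqQ' : q ∈ Q' := ⟨hq, hcon.le⟩
      have hmin' : d qs ≤ d q := isMinOn_iff.mp hmin q hqQ'
      linarith
  have htN_le : ∀ q : R3 × ℝ, ∀ r : ℝ, tN q r ≤ wp q := fun q r => min_le_left _ _
  have htN_nonneg : ∀ q : R3 × ℝ, ∀ r : ℝ, 0 ≤ r → 0 ≤ tN q r := by
    intro q r hr
    exact le_min (hwp_nonneg q) (mul_nonneg (div_nonneg (hwp_nonneg q) (hd_nonneg q)) hr)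
  set nu : ℝ → ℝ := fun r => sSup ((fun q => tN q r) '' Q) with hnudef
  have hnubdd : ∀ r, BddAbove ((fun q => tN q r) '' Q) := by
    intro r
    refine ⟨1, ?_⟩
    rintro x ⟨q, hq, rfl⟩
    exact (htN_le q r).trans (hwp_le1 q hq)
  have hnu_nonneg : ∀ r, 0 ≤ nu r := by
    intro r
    have h : tN (A + w, (0:ℝ)) r ≤ nu r :=
      le_csSup (hnubdd r) ⟨(A + w, (0:ℝ)), hQB, rfl⟩
    rw [htNB r] at h
    exact h
  have hnu0 : nu 0 = 0 := by
    refine le_antisymm (Real.sSup_le ?_ le_rfl) (hnu_nonneg 0)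
    rintro x ⟨q, hq, rfl⟩
    simp only [htNdef, mul_zero]
    exact min_le_right _ _
  have hnu_ge : ∀ q ∈ Q, wq q ≤ nu (d q) := by
    intro q hq
    rcases eq_or_lt_of_le (hd_nonneg q) with h0 | hpos
    · rw [← h0, hnu0]
      exact hdist0 q hq h0.symm
    · have : tN q (d q) = wp q := by
        simp only [htNdef]
        rw [div_mul_cancel₀ _ (ne_of_gt hpos)]
        exact min_self _
      calc wq q ≤ wp q := le_max_left _ _
        _ = tN q (d q) := this.symm
        _ ≤ nu (d q) := le_csSup (hnubdd _) (mem_image_of_mem _ hq)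
  have hnu_unif : ∀ ε : ℝ, 0 < ε → ∃ δ : ℝ, 0 < δ ∧ ∀ r r' : ℝ, 0 ≤ r → 0 ≤ r' →
      |r - r'| ≤ δ → nu r ≤ nu r' + ε := by
    intro ε hε
    obtain ⟨η, hη, hF⟩ := hF1 ε hε
    refine ⟨ε * η, mul_pos hε hη, ?_⟩
    intro r r' hr hr' hrr
    refine Real.sSup_le ?_ (by linarith [hnu_nonneg r'])
    rintro x ⟨q, hq, rfl⟩
    rcases le_or_gt (d q) η with hdq | hdq
    · have h1 : wq q ≤ ε := hF q hq hdq
      have h2 : wp q ≤ ε := max_le h1 hε.le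
      have := htN_le q r
      linarith [hnu_nonneg r']
    · have hdpos : 0 < d q := lt_of_le_of_lt hη.le hdq
      have hsnn : 0 ≤ wp q / d q := div_nonneg (hwp_nonneg q) (hd_nonneg q)
      have hs : wp q / d q * |r - r'| ≤ ε := by
        have h1 : wp q / d q ≤ 1 / η := by
          rw [div_le_div_iff₀ hdpos hη]
          nlinarith [hwp_le1 q hq]
        calc wp q / d q * |r - r'| ≤ (1 / η) * (ε * η) :=
              mul_le_mul h1 hrr (abs_nonneg _) (by positivity)
          _ = ε := by field_simp
      have h3 : wp q / d q * r ≤ wp q / d q * r' + wp q / d q * |r - r'| := by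
        have hle : r ≤ r' + |r - r'| := by
          have := le_abs_self (r - r')
          linarith
        nlinarith
      have key : tN q r ≤ tN q r' + wp q / d q * |r - r'| := by
        simp only [htNdef]
        rcases le_total (wp q) (wp q / d q * r') with hm | hm
        · calc min (wp q) (wp q / d q * r) ≤ wp q := min_le_left _ _
            _ ≤ min (wp q) (wp q / d q * r') + wp q / d q * |r - r'| := by
                rw [min_eq_left hm]
                nlinarith [mul_nonneg hsnn (abs_nonneg (r - r'))]
        · calc min (wp q) (wp q / d q * r) ≤ wp q / d q * r := min_le_right _ _
            _ ≤ wp q / d q * r' + wp q / d q * |r - r'| := h3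
            _ = min (wp q) (wp q / d q * r') + wp q / d q * |r - r'| := by
                rw [min_eq_right hm]
      have htn' : tN q r' ≤ nu r' := le_csSup (hnubdd r') (mem_image_of_mem _ hq)
      linarith
  have hnu_contOn : ContinuousOn nu (Ici 0) := by
    rw [Metric.continuousOn_iff]
    intro b hb ε hε
    obtain ⟨δ, hδ, huu⟩ := hnu_unif (ε/2) (by linarith)
    refine ⟨δ, hδ, ?_⟩
    intro a ha hab
    have h1 : |a - b| ≤ δ := by rw [Real.dist_eq] at hab; exact hab.le
    have h2 : |b - a| ≤ δ := by rw [abs_sub_comm]; exact h1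
    have l1 := huu a b (mem_Ici.mp ha) (mem_Ici.mp hb) h1
    have l2 := huu b a (mem_Ici.mp hb) (mem_Ici.mp ha) h2
    rw [Real.dist_eq, abs_lt]
    constructor <;> linarith
  -- the directional infimum
  set inr : R3 → ℝ := fun x =>
    sInf ((fun τ => mu τ + nu (infDist (x + τ • u) K)) '' Icc 0 2) with hinrdef
  have h02 : (0:ℝ) ∈ Icc (0:ℝ) 2 := by norm_num
  have hinr_ne : ∀ x : R3, ((fun τ => mu τ + nu (infDist (x + τ • u) K)) '' Icc 0 2).Nonempty :=
    fun x => ⟨_, mem_image_of_mem _ h02⟩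
  have hinr_bdd : ∀ x : R3, BddBelow ((fun τ => mu τ + nu (infDist (x + τ • u) K)) '' Icc 0 2) := by
    intro x
    refine ⟨0, ?_⟩
    rintro y ⟨τ, hτ, rfl⟩
    have := hmunn τ
    have := hnu_nonneg (infDist (x + τ • u) K)
    simp only
    linarith
  have hinr_le : ∀ (x : R3) (τ : ℝ), τ ∈ Icc (0:ℝ) 2 →
      inr x ≤ mu τ + nu (infDist (x + τ • u) K) :=
    fun x τ hτ => csInf_le (hinr_bdd x) (mem_image_of_mem _ hτ)
  have hinr_seg : ∀ x ∈ Seg, vA x ≤ inr x := by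
    intro x hx
    apply le_csInf (hinr_ne x)
    rintro y ⟨τ, hτ, rfl⟩
    have hqQ : ((x, τ) : R3 × ℝ) ∈ Q := ⟨hx, hτ⟩
    have := hnu_ge _ hqQ
    simp only [hwqdef, hddef] at this
    simp only
    linarith
  have hinr_K : ∀ k ∈ K, inr k ≤ 0 := by
    intro k hk
    have h1 := hinr_le k 0 h02
    rw [zero_smul, add_zero, infDist_zero_of_mem hk, hnu0, hmu0] at h1
    linarith
  have hinr_cont : Continuous inr := by
    rw [Metric.continuous_iff]
    intro x₀ ε hε
    obtain ⟨δ, hδ, huu⟩ := hnu_unif (ε/2) (by linarith)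
    refine ⟨δ, hδ, ?_⟩
    intro x hxx
    have key : ∀ y z : R3, dist y z ≤ δ → inr y ≤ inr z + ε/2 := by
      intro y z hyz
      have hterm : ∀ τ ∈ Icc (0:ℝ) 2,
          inr y ≤ mu τ + nu (infDist (z + τ • u) K) + ε/2 := by
        intro τ hτ
        have h1 := hinr_le y τ hτ
        have hdeq : dist (y + τ • u) (z + τ • u) = dist y z := by
          rw [dist_add_right]
        have h2 : |infDist (y + τ • u) K - infDist (z + τ • u) K| ≤ δ := by
          rw [abs_sub_le_iff]
          constructor
          · have := infDist_le_infDist_add_dist (x := y + τ • u) (y := z + τ • u) (s := K)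
            rw [hdeq] at this
            linarith
          · have := infDist_le_infDist_add_dist (x := z + τ • u) (y := y + τ • u) (s := K)
            rw [dist_comm, hdeq] at this
            linarith
        have h3 := huu _ _ infDist_nonneg infDist_nonneg h2
        linarith
      have : inr y - ε/2 ≤ inr z := by
        apply le_csInf (hinr_ne z)
        rintro val ⟨τ, hτ, rfl⟩
        have := hterm τ hτ
        simp only
        linarith
      linarith
    have h1 := key x x₀ (le_of_lt hxx)
    have h2 := key x₀ x (by rw [dist_comm]; exact (le_of_lt hxx))
    rw [Real.dist_eq, abs_lt]
    constructor <;> linarith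
  have hcomb : ∀ (x : R3) (a b : ℝ), x + (a + b) • u = (x + b • u) + a • u := by
    intro x a b
    rw [add_smul]
    abel
  set G : R3 → ℝ := fun x => min 1 (inr x) with hGdef
  have hGstrict : ∀ (x : R3) (τ₀ : ℝ), 0 < τ₀ → G x - τ₀ < G (x + τ₀ • u) := by
    intro x τ₀ hτ₀
    have hcont2 : ContinuousOn
        (fun τ : ℝ => mu τ + nu (infDist ((x + τ₀ • u) + τ • u) K)) (Icc 0 2) := by
      apply ContinuousOn.add (hmucont.continuousOn)
      apply hnu_contOn.comp
      · exact ((continuous_infDist_pt K).comp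
          (continuous_const.add (continuous_id.smul continuous_const))).continuousOn
      · intro τ _
        exact infDist_nonneg
    obtain ⟨τh, hτh, hminon⟩ := isCompact_Icc.exists_isMinOn ⟨0, h02⟩ hcont2
    have hval : inr (x + τ₀ • u) = mu τh + nu (infDist ((x + τ₀ • u) + τh • u) K) := by
      apply le_antisymm (hinr_le _ τh hτh)
      apply le_csInf (hinr_ne _)
      rintro val ⟨τ, hτ, rfl⟩
      exact hminon hτ
    rcases le_or_gt 1 (inr (x + τ₀ • u)) with hc | hc
    · have heq : G (x + τ₀ • u) = 1 := min_eq_left hc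
      have h2 : G x ≤ 1 := min_le_left _ _
      rw [heq]
      linarith
    · have hGeq : G (x + τ₀ • u) = inr (x + τ₀ • u) := min_eq_right hc.le
      rcases le_or_gt (τh + τ₀) 2 with hle | hgt
      · have hmem : τh + τ₀ ∈ Icc (0:ℝ) 2 := ⟨by linarith [hτh.1], hle⟩
        have h1 := hinr_le x (τh + τ₀) hmem
        rw [hcomb x τh τ₀] at h1
        have h2 := hmustrict τh (τh + τ₀) hτh.1 (by linarith)
        have h3 : G x ≤ inr x := min_le_right _ _
        rw [hGeq, hval]
        linarith
      · have h4 : 1 - τ₀ < mu τh := by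
          rcases le_or_gt 2 τh with h5 | h5
          · have hm1 : min (1:ℝ) (τh / 2) = 1 := min_eq_left (by linarith)
            have := hmuhalf τh
            rw [hm1] at this
            linarith
          · have hm1 : min (1:ℝ) (τh / 2) = τh / 2 := min_eq_right (by linarith)
            have := hmuhalf τh
            rw [hm1] at this
            linarith
        have h5 : 0 ≤ nu (infDist ((x + τ₀ • u) + τh • u) K) := hnu_nonneg _
        have h6 : G x ≤ 1 := min_le_left _ _
        rw [hGeq, hval]
        linarith
  set lam : R3 → ℝ := fun x => max 0 (min (vA x) (G x)) with hlamdef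
  refine ⟨lam, ?_, ?_, ?_, ?_, ?_, ?_⟩
  · exact continuous_const.max (hvc.min (continuous_const.min hinr_cont))
  · intro x
    exact le_max_left _ _
  · intro x
    have h1 : min (vA x) (G x) ≤ 1 := (min_le_right _ _).trans (min_le_left _ _)
    exact max_le zero_le_one h1
  · intro x τ hτ
    have hvv : vA (x + τ • u) = vA x := hvline x τ
    have hmm : min (vA x) (G x) - τ < min (vA (x + τ • u)) (G (x + τ • u)) := by
      apply lt_min
      · rw [hvv]
        have := min_le_left (vA x) (G x)
        linarith
      · have := hGstrict x τ hτ
        have h2 := min_le_right (vA x) (G x)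
        linarith
    rcases le_total (min (vA x) (G x)) 0 with h | h
    · have heq : lam x = 0 := max_eq_left h
      have h2 : 0 ≤ lam (x + τ • u) := le_max_left _ _
      rw [heq]
      linarith
    · have heq : lam x = min (vA x) (G x) := max_eq_right h
      rw [heq]
      calc min (vA x) (G x) - τ < min (vA (x + τ • u)) (G (x + τ • u)) := hmm
        _ ≤ lam (x + τ • u) := le_max_right _ _
  · intro θ h0 h1
    have hxS : A + θ • w ∈ Seg := ⟨θ, ⟨h0, h1⟩, rfl⟩
    have hv : vA (A + θ • w) = 1 - θ := hvseg θ
    have hG : 1 - θ ≤ G (A + θ • w) := by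
      apply le_min (by linarith)
      rw [← hv]
      exact hinr_seg _ hxS
    have hmin : min (vA (A + θ • w)) (G (A + θ • w)) = 1 - θ := by
      rw [hv]
      exact min_eq_left hG
    have : lam (A + θ • w) = max 0 (min (vA (A + θ • w)) (G (A + θ • w))) := rfl
    rw [this, hmin]
    exact max_eq_right (by linarith)
  · intro k hk
    have h1 : G k ≤ 0 := (min_le_right _ _).trans (hinr_K k hk)
    have h2 : min (vA k) (G k) ≤ 0 := (min_le_right _ _).trans h1
    exact max_eq_left h2


def IsLineWithDir' (v : R3) (l : Set R3) : Prop :=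
  ∃ p : R3, l = {x : R3 | ∃ t : ℝ, x = p + t • v}

theorem main_slide
    (ℓ1 ℓ2 : Set R3)
    (hrails : (∃ v : R3, v ≠ 0 ∧ IsLineWithDir' v ℓ1 ∧ IsLineWithDir' v ℓ2) ∧
      Disjoint ℓ1 ℓ2 ∧ ℓ1 ≠ ℓ2)
    (c c' : unitInterval → R3)
    (hc_cont : Continuous c) (hc_inj : Function.Injective c) (hc0 : c 0 ∈ ℓ1)
    (a : unitInterval) (ha0 : 0 < (a : ℝ)) (ha1 : (a : ℝ) < 1)
    (A B C : R3) (hA : A = c 0) (hB : B = c a) (hC : C ∈ ℓ1)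
    (hseg : c '' {t : unitInterval | (t : ℝ) ≤ (a : ℝ)} = segment ℝ A B)
    (hindep : AffineIndependent ℝ ![A, B, C])
    (T : Set R3) (hT : T = convexHull ℝ {A, B, C})
    (hTc : T ∩ Set.range c = segment ℝ A B)
    (hfix : ∀ t : unitInterval, (a : ℝ) ≤ (t : ℝ) → c' t = c t)
    (hseg' : c' '' {t : unitInterval | (t : ℝ) ≤ (a : ℝ)} = segment ℝ C B) :
    ∃ H : unitInterval → R3 → R3, RailIsotopy ℓ1 ℓ2 c c' H := by
  classical
  suffices hsuf : ∃ H : unitInterval → R3 → R3,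
      Continuous (Function.uncurry H) ∧ H 0 = id ∧
      (∀ t : unitInterval, ∃ φ : R3 ≃ₜ R3, ⇑φ = H t ∧ φ '' ℓ1 = ℓ1 ∧ φ '' ℓ2 = ℓ2) ∧
      H 1 '' (Set.range c) = Set.range c' by
    obtain ⟨H, h1, h2, h3, h4⟩ := hsuf
    exact ⟨H, h1, h2, h3, h4⟩
  set u : R3 := C - A with hu_def
  set w : R3 := B - A with hw_def
  have hBAw : B = A + w := by rw [hw_def]; abel
  have hCAu : C = A + u := by rw [hu_def]; abel
  -- basic distinctness
  have hAC : A ≠ C := by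
    intro h
    have h2 : (0 : Fin 3) = 2 := hindep.injective (by simp [h])
    exact absurd h2 (by decide)
  have hu_ne : u ≠ 0 := sub_ne_zero.mpr (Ne.symm hAC)
  have hncol : ¬ Collinear ℝ ({A, B, C} : Set R3) := by
    have h := affineIndependent_iff_not_collinear.mp hindep
    intro hcol
    apply h
    refine Collinear.subset ?_ hcol
    rintro x ⟨i, rfl⟩
    fin_cases i <;> simp
  -- linear independence of u, w
  have hli : ∀ s t : ℝ, s • u + t • w = 0 → s = 0 ∧ t = 0 := by
    intro s t hrel
    by_contra hcon
    apply hncol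
    apply (collinear_iff_of_mem (Set.mem_insert A {B, C})).mpr
    rcases eq_or_ne t 0 with ht | ht
    · have hs : s ≠ 0 := fun h => hcon ⟨h, ht⟩
      rw [ht, zero_smul, add_zero] at hrel
      have hu0 : u = 0 := by
        rcases smul_eq_zero.mp hrel with h | h
        · exact absurd h hs
        · exact h
      exact absurd hu0 hu_ne
    · refine ⟨u, ?_⟩
      have hw2 : w = (-(s / t)) • u := by
        have h1 : t • w = -(s • u) := by
          rw [eq_neg_iff_add_eq_zero, add_comm]
          exact hrel
        have h2 : w = t⁻¹ • (t • w) := by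
          rw [smul_smul, inv_mul_cancel₀ ht, one_smul]
        rw [h2, h1, smul_neg, smul_smul, ← neg_smul]
        congr 1
        field_simp
      rintro p hp
      simp only [Set.mem_insert_iff, Set.mem_singleton_iff] at hp
      rcases hp with rfl | rfl | rfl
      · exact ⟨0, by simp⟩
      · refine ⟨-(s / t), ?_⟩
        rw [← hw2, vadd_eq_add, hBAw]
        abel
      · refine ⟨1, ?_⟩
        rw [vadd_eq_add, one_smul, hCAu]
        abel
  -- the dual functional
  have huu : u ⬝ᵥ u ≠ 0 := fun h => hu_ne (dotProduct_self_eq_zero.mp h)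
  set wt : R3 := w - ((w ⬝ᵥ u) / (u ⬝ᵥ u)) • u with hwt_def
  have hwtu : wt ⬝ᵥ u = 0 := by
    rw [hwt_def, sub_dotProduct, smul_dotProduct, smul_eq_mul,
      div_mul_cancel₀ _ huu, sub_self]
  have hwt_ne : wt ≠ 0 := by
    intro h
    have hw2 : ((w ⬝ᵥ u) / (u ⬝ᵥ u)) • u + (-1 : ℝ) • w = 0 := by
      rw [neg_one_smul]
      rw [hwt_def] at h
      have := sub_eq_zero.mp h
      rw [← this]
      abel
    have := (hli _ _ hw2).2
    norm_num at this
  have hwtwt : wt ⬝ᵥ wt ≠ 0 := fun h => hwt_ne (dotProduct_self_eq_zero.mp h)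
  have hwtw : wt ⬝ᵥ w = wt ⬝ᵥ wt := by
    have : wt ⬝ᵥ (w - wt) = (w ⬝ᵥ u) / (u ⬝ᵥ u) * (wt ⬝ᵥ u) := by
      rw [hwt_def]
      simp only [sub_sub_cancel, dotProduct_smul, smul_eq_mul]
    rw [hwtu, mul_zero] at this
    rw [dotProduct_sub] at this
    linarith
  set vA : R3 → ℝ := fun x => 1 - (wt ⬝ᵥ (x - A)) / (wt ⬝ᵥ wt) with hvA_def
  have hvc : Continuous vA := by
    have hdc : Continuous (fun x : R3 => wt ⬝ᵥ (x - A)) := by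
      simp only [dotProduct]
      exact continuous_finset_sum _ (fun i _ =>
        continuous_const.mul ((continuous_apply i).sub continuous_const))
    exact continuous_const.sub (hdc.div_const _)
  have hvline : ∀ (x : R3) (τ : ℝ), vA (x + τ • u) = vA x := by
    intro x τ
    rw [hvA_def]
    simp only
    have h1 : x + τ • u - A = (x - A) + τ • u := by abel
    rw [h1, dotProduct_add, dotProduct_smul, smul_eq_mul, hwtu, mul_zero, add_zero]
  have hvseg : ∀ θ : ℝ, vA (A + θ • w) = 1 - θ := by
    intro θ
    rw [hvA_def]
    simp only
    have h1 : A + θ • w - A = θ • w := by abel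
    rw [h1, dotProduct_smul, smul_eq_mul, hwtw, mul_div_assoc, div_self hwtwt, mul_one]
  -- the tail K
  set K : Set R3 := c '' {t : unitInterval | (a : ℝ) ≤ (t : ℝ)} with hK_def
  have hKc : IsCompact K := by
    have h1 : IsClosed {t : unitInterval | (a : ℝ) ≤ (t : ℝ)} :=
      isClosed_le continuous_const continuous_subtype_val
    exact (h1.isCompact).image hc_cont
  have hBK : A + w ∈ K := by
    rw [← hBAw]
    refine ⟨a, ?_, hB.symm⟩
    simp
  -- triangle facts
  have hKT : ∀ x ∈ K, x ∈ T → x = B := by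
    intro x hxK hxT
    have hxr : x ∈ Set.range c := by
      obtain ⟨t, _, rfl⟩ := hxK
      exact ⟨t, rfl⟩
    have hxseg : x ∈ segment ℝ A B := by
      rw [← hTc]
      exact ⟨hxT, hxr⟩
    rw [← hseg] at hxseg
    obtain ⟨t', ht', hct'⟩ := hxseg
    obtain ⟨t, ht, hct⟩ := hxK
    have htt : t = t' := hc_inj (by rw [hct, hct'])
    have hta : (t : ℝ) = (a : ℝ) := le_antisymm (by rw [htt]; exact ht') ht
    have : t = a := Subtype.ext hta
    rw [← hct, this, ← hB]
  have hTmem : ∀ θ τ : ℝ, 0 ≤ θ → 0 ≤ τ → θ + τ ≤ 1 → A + θ • w + τ • u ∈ T := by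
    intro θ τ h0 h1 hsum
    rw [hT]
    have hcm := Finset.centerMass_mem_convexHull (s := ({A, B, C} : Set R3))
      (Finset.univ : Finset (Fin 3))
      (w := ![1 - θ - τ, θ, τ]) (z := ![A, B, C])
      (fun i _ => by fin_cases i <;> simp <;> linarith)
      (by simp [Fin.sum_univ_three]; linarith)
      (fun i _ => by fin_cases i <;> simp [Set.mem_insert_iff])
    have heq : Finset.univ.centerMass ![1 - θ - τ, θ, τ] ![A, B, C] = A + θ • w + τ • u := by
      rw [Finset.centerMass]
      have hsum1 : (∑ i, (![1 - θ - τ, θ, τ]) i) = 1 := by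
        simp [Fin.sum_univ_three]
        ring
      rw [hsum1, inv_one, one_smul, Fin.sum_univ_three]
      simp only [Matrix.cons_val_zero, Matrix.cons_val_one, Matrix.head_cons,
        Matrix.cons_val_two, Matrix.tail_cons]
      rw [hw_def, hu_def]
      module
    rwa [heq] at hcm
  have hGEO : ∀ θ τ : ℝ, 0 ≤ θ → θ ≤ 1 → 0 ≤ τ → A + θ • w + τ • u ∈ K →
      1 - θ < τ ∨ (τ = 0 ∧ θ = 1) := by
    intro θ τ h0 h1 hτ hmem
    by_cases hcase : 1 - θ < τ
    · exact Or.inl hcase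
    · push_neg at hcase
      have hT' : A + θ • w + τ • u ∈ T := hTmem θ τ h0 hτ (by linarith)
      have hBeq : A + θ • w + τ • u = B := hKT _ hmem hT'
      have hrel : τ • u + (θ - 1) • w = 0 := by
        rw [hBAw] at hBeq
        calc τ • u + (θ - 1) • w = (A + θ • w + τ • u) - (A + w) := by
              rw [sub_smul, one_smul]; abel
          _ = 0 := by rw [hBeq]; abel
      obtain ⟨hτ0, hθ1⟩ := hli τ (θ - 1) hrel
      exact Or.inr ⟨hτ0, by linarith [hθ1]⟩
  -- lines invariance
  obtain ⟨⟨vdir, hvne, ⟨p1, hp1⟩, ⟨p2, hp2⟩⟩, hdisj, hlne⟩ := hrails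
  have hAl1 : A ∈ ℓ1 := by rw [hA]; exact hc0
  rw [hp1] at hAl1 hC
  obtain ⟨t1, ht1⟩ := hAl1
  obtain ⟨t2, ht2⟩ := hC
  have hudir : u = (t2 - t1) • vdir := by
    rw [hu_def, ht1, ht2, sub_smul]
    abel
  have hl1inv : ∀ x ∈ ℓ1, ∀ r : ℝ, x + r • u ∈ ℓ1 := by
    intro x hx r
    rw [hp1] at hx ⊢
    obtain ⟨t, ht⟩ := hx
    refine ⟨t + r * (t2 - t1), ?_⟩
    rw [ht, hudir, smul_smul, add_smul]
    abel
  have hl2inv : ∀ x ∈ ℓ2, ∀ r : ℝ, x + r • u ∈ ℓ2 := by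
    intro x hx r
    rw [hp2] at hx ⊢
    obtain ⟨t, ht⟩ := hx
    refine ⟨t + r * (t2 - t1), ?_⟩
    rw [ht, hudir, smul_smul, add_smul]
    abel
  -- get the displacement function
  obtain ⟨lam, hlamc, hlam0, hlam1, hlam_strict, hlam_seg, hlam_K⟩ :=
    lam_exists A u w vA K hvc hvline hvseg hKc hBK hGEO
  -- the isotopy
  refine ⟨fun s x => x + (((s : ℝ)) * lam x) • u, ?_, ?_, ?_, ?_⟩
  · -- continuity of uncurry
    apply Continuous.add continuous_snd
    exact (((continuous_subtype_val.comp continuous_fst).mul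
      (hlamc.comp continuous_snd)).smul continuous_const)
  · -- H 0 = id
    funext x
    simp
  · -- slices are homeomorphisms preserving the rails
    intro t
    obtain ⟨φ, hφeq, hφlines⟩ :=
      shear_homeo u lam hlamc hlam0 hlam1 hlam_strict t.2.1 t.2.2
    exact ⟨φ, hφeq, hφlines ℓ1 hl1inv, hφlines ℓ2 hl2inv⟩
  · -- image of the arc
    have hrange_c : Set.range c = segment ℝ A B ∪ K := by
      rw [← Set.image_univ]
      have huniv : (Set.univ : Set unitInterval) =
          {t : unitInterval | (t : ℝ) ≤ (a : ℝ)} ∪ {t : unitInterval | (a : ℝ) ≤ (t : ℝ)} := by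
        ext t
        simp only [Set.mem_univ, Set.mem_union, Set.mem_setOf_eq, true_iff]
        exact le_total _ _
      rw [huniv, Set.image_union, hseg, hK_def]
    have hrange_c' : Set.range c' = segment ℝ C B ∪ K := by
      rw [← Set.image_univ]
      have huniv : (Set.univ : Set unitInterval) =
          {t : unitInterval | (t : ℝ) ≤ (a : ℝ)} ∪ {t : unitInterval | (a : ℝ) ≤ (t : ℝ)} := by
        ext t
        simp only [Set.mem_univ, Set.mem_union, Set.mem_setOf_eq, true_iff]
        exact le_total _ _
      rw [huniv, Set.image_union, hseg', hK_def]
      congr 1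
      exact Set.image_congr (fun t ht => hfix t ht)
    have himg : (fun x : R3 => x + (((1 : unitInterval) : ℝ) * lam x) • u) '' Set.range c
        = (fun x : R3 => x + lam x • u) '' Set.range c := by
      apply Set.image_congr
      intro x _
      norm_num
    show (fun x : R3 => x + (((1 : unitInterval) : ℝ) * lam x) • u) '' Set.range c
      = Set.range c'
    rw [himg, hrange_c, hrange_c', Set.image_union]
    congr 1
    · -- segment A B ↦ segment C B
      rw [segment_eq_image' ℝ A B, segment_eq_image' ℝ C B, ← Set.image_comp]
      apply Set.image_congr
      intro θ hθ
      have hval : lam (A + θ • w) = 1 - θ := hlam_seg θ hθ.1 hθ.2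
      simp only [Function.comp_apply]
      rw [← hw_def, hval, hCAu, hu_def, hw_def]
      module
    · -- K is fixed pointwise
      apply Subset.antisymm
      · rintro _ ⟨x, hx, rfl⟩
        show x + lam x • u ∈ K
        rw [hlam_K x hx, zero_smul, add_zero]
        exact hx
      · intro x hx
        refine ⟨x, hx, ?_⟩
        show x + lam x • u = x
        rw [hlam_K x hx, zero_smul, add_zero]


/-- A space slide move on a rail arc (sliding the endpoint of the arc along a rail, replacing
the initial straight segment `[A,B]` by `[C,B]`, where `A, C ∈ ℓ1` and the triangle
`T = conv{A,B,C}` meets the arc only in `[A,B]` and meets the rails only in `[A,C]`) is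
realized by a rail isotopy of `ℝ³`. -/
theorem slide_move_is_rail_isotopy
    (ℓ1 ℓ2 : Set R3) (hrails : RailsPair ℓ1 ℓ2)
    (c c' : unitInterval → R3) (hc : RailArc ℓ1 ℓ2 c) (hc' : RailArc ℓ1 ℓ2 c')
    (a : unitInterval) (ha0 : 0 < (a : ℝ)) (ha1 : (a : ℝ) < 1)
    (A B C : R3) (hA : A = c 0) (hB : B = c a) (hC : C ∈ ℓ1)
    (hseg : c '' {t : unitInterval | (t : ℝ) ≤ (a : ℝ)} = segment ℝ A B)
    (hindep : AffineIndependent ℝ ![A, B, C])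
    (T : Set R3) (hT : T = convexHull ℝ {A, B, C})
    (hTc : T ∩ Set.range c = segment ℝ A B)
    (hTrails : T ∩ (ℓ1 ∪ ℓ2) = segment ℝ A C)
    (hfix : ∀ t : unitInterval, (a : ℝ) ≤ (t : ℝ) → c' t = c t)
    (hC0 : c' 0 = C)
    (hseg' : c' '' {t : unitInterval | (t : ℝ) ≤ (a : ℝ)} = segment ℝ C B) :
    ∃ H : unitInterval → R3 → R3, RailIsotopy ℓ1 ℓ2 c c' H := by
  exact main_slide ℓ1 ℓ2 hrails c c' hc.1 hc.2.1 hc.2.2.1 a ha0 ha1 A B C hA hB hC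
    hseg hindep T hT hTc hfix hseg'
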